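/- Let V be a finite set with at least two elements, Q a finite nonempty set of prompts with weights w : Q → ℝ, w(s) ≥ 0 and Σ_{s ∈ Q} w(s) = 1, and c : Q → V an assignment of the correct token to each prompt. A model is a function p : Q → (V → ℝ) with p(s)(k) > 0 for all s, k and Σ_{k ∈ V} p(s)(k) = 1 for all s. Let S be a Q-valued random variable with P(S = s) = w(s), and let U = (U_k)_{k ∈ V} and U' = (U'_k)_{k ∈ V} be families of independent standard Gumbel random variables, with S, U, U' mutually independent. For a model p define the score R_p(U, S) = 1{∀ k ≠ c(S), log p(S)(c(S)) + U_{c(S)} > log p(S)(k) + U_k}. Then for every model p there exists ε > 0 such that for every model q with max_{s ∈ Q, k ∈ V} |p(s)(k) − q(s)(k)| < ε, one has Var(R_p(U, S) − R_q(U', S)) > Var(R_p(U, S) − R_q(U, S)). -/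

import Mathlib

open MeasureTheory ProbabilityTheory

/-- The standard Gumbel distribution on `ℝ`: the Borel probability measure with density
`x ↦ exp(−x − exp(−x))` with respect to Lebesgue measure. -/
noncomputable def stdGumbel : Measure ℝ :=
  volume.withDensity fun x => ENNReal.ofReal (Real.exp (-x - Real.exp (-x)))

/-- The benchmark score of the model with next-token distributions `p` under noise `U` and
prompt `S`: the indicator of the event that the correct token `c (S ω)` strictly maximizes
`log (p (S ω) k) + U k ω` over `k ∈ V`. -/
noncomputable def score {Ω QT V : Type*} (p : QT → V → ℝ) (c : QT → V)
    (U : V → Ω → ℝ) (S : Ω → QT) : Ω → ℝ :=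
  Set.indicator
    {ω | ∀ k ≠ c (S ω),
      Real.log (p (S ω) k) + U k ω < Real.log (p (S ω) (c (S ω))) + U (c (S ω)) ω}
    fun _ => (1 : ℝ)

lemma gumbel_density_le (x : ℝ) : Real.exp (-x - Real.exp (-x)) ≤ Real.exp (-1) := by
  apply Real.exp_le_exp.2
  have := Real.add_one_le_exp (-x)
  linarith

lemma stdGumbel_Icc_le (a b : ℝ) :
    stdGumbel (Set.Icc a b) ≤ ENNReal.ofReal ((b - a) * Real.exp (-1)) := by
  rcases le_or_gt a b with h | h
  · rw [stdGumbel, withDensity_apply _ measurableSet_Icc]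
    calc ∫⁻ x in Set.Icc a b, ENNReal.ofReal (Real.exp (-x - Real.exp (-x)))
        ≤ ∫⁻ _x in Set.Icc a b, ENNReal.ofReal (Real.exp (-1)) :=
          lintegral_mono fun x => ENNReal.ofReal_le_ofReal (gumbel_density_le x)
      _ = ENNReal.ofReal (Real.exp (-1)) * volume (Set.Icc a b) := setLIntegral_const _ _
      _ = ENNReal.ofReal ((b - a) * Real.exp (-1)) := by
          rw [Real.volume_Icc, mul_comm, ← ENNReal.ofReal_mul (by linarith)]
  · simp [Set.Icc_eq_empty_of_lt h]

lemma stdGumbel_Icc_pos {a b : ℝ} (h : a < b) : 0 < stdGumbel (Set.Icc a b) := by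
  rw [stdGumbel, withDensity_apply _ measurableSet_Icc]
  have hlb : ∀ x ∈ Set.Icc a b,
      ENNReal.ofReal (Real.exp (-b - Real.exp (-a))) ≤
        ENNReal.ofReal (Real.exp (-x - Real.exp (-x))) := by
    intro x hx
    apply ENNReal.ofReal_le_ofReal
    apply Real.exp_le_exp.2
    have h1 : Real.exp (-x) ≤ Real.exp (-a) := Real.exp_le_exp.2 (by linarith [hx.1])
    have := hx.2
    linarith
  calc (0 : ENNReal) < ENNReal.ofReal (Real.exp (-b - Real.exp (-a))) * volume (Set.Icc a b) := by
        apply ENNReal.mul_pos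
        · simp [ENNReal.ofReal_pos, Real.exp_pos]
        · simp [Real.volume_Icc]; linarith
    _ = ∫⁻ _x in Set.Icc a b, ENNReal.ofReal (Real.exp (-b - Real.exp (-a))) :=
        (setLIntegral_const _ _).symm
    _ ≤ _ := setLIntegral_mono (by fun_prop) hlb

lemma log_sub_log_le {x y δ : ℝ} (hδ : 0 < δ) (hx : δ ≤ x) (hy : δ ≤ y) :
    Real.log y - Real.log x ≤ |x - y| / δ := by
  rcases le_or_gt y x with h | h
  · have h1 : Real.log y ≤ Real.log x := Real.log_le_log (by linarith) h
    have h2 : (0:ℝ) ≤ |x - y| / δ := div_nonneg (abs_nonneg _) hδ.le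
    linarith
  · have hx0 : 0 < x := lt_of_lt_of_le hδ hx
    have h1 : Real.log (y / x) ≤ y / x - 1 :=
      Real.log_le_sub_one_of_pos (div_pos (lt_of_lt_of_le hδ hy) hx0)
    rw [Real.log_div (by linarith) (by linarith)] at h1
    have h2 : y / x - 1 = (y - x) / x := by field_simp
    have h3 : (y - x) / x ≤ (y - x) / δ := by
      apply div_le_div_of_nonneg_left (by linarith) hδ hx
    have h4 : |x - y| = y - x := by rw [abs_sub_comm]; exact abs_of_pos (by linarith)
    rw [h4]; linarith

lemma abs_log_sub_log_le {x y δ : ℝ} (hδ : 0 < δ) (hx : δ ≤ x) (hy : δ ≤ y) :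
    |Real.log x - Real.log y| ≤ |x - y| / δ := by
  rw [abs_sub_le_iff]
  constructor
  · have := log_sub_log_le hδ hy hx; rwa [abs_sub_comm] at this
  · exact log_sub_log_le hδ hx hy

set_option maxHeartbeats 1000000 in
/-- **Proposition 3.** On a benchmark with one correct single-token answer per prompt, for every
model `p` (sampling via the Gumbel-max mechanism) there is `ε > 0` such that for every
sufficiently close model `q` (`sup-distance < ε`), the variance of the difference of scores is
strictly smaller under coupled generation (shared Gumbel noise `U`) than under independent
generation (fresh noise `U'` for the second model). -/
theorem variance_coupled_lt_variance_independent_gumbel_max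
    {V : Type*} [Fintype V] (hV : 2 ≤ Fintype.card V)
    {QT : Type*} [Fintype QT] [Nonempty QT] [MeasurableSpace QT]
    [MeasurableSingletonClass QT]
    (w : QT → ℝ) (hw : ∀ s, 0 ≤ w s) (hws : ∑ s, w s = 1)
    (c : QT → V)
    {Ω : Type*} [MeasurableSpace Ω] (P : Measure Ω) [IsProbabilityMeasure P]
    (S : Ω → QT) (hS : Measurable S) (hSw : ∀ s, P (S ⁻¹' {s}) = ENNReal.ofReal (w s))
    (U U' : V → Ω → ℝ)
    (hUm : ∀ k, Measurable (U k)) (hU'm : ∀ k, Measurable (U' k))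
    (hgumbel : ∀ k, P.map (U k) = stdGumbel) (hgumbel' : ∀ k, P.map (U' k) = stdGumbel)
    -- `S`, `U`, `U'` are mutually independent: the `2 |V|` Gumbel coordinates are mutually
    -- independent, and `S` is independent of the pair of noise families `(U, U')`
    (hUU' : iIndepFun (Sum.elim U U') P)
    (hS_UU' : IndepFun S (fun ω => ((fun k => U k ω), fun k => U' k ω)) P)
    (p : QT → V → ℝ) (hp : ∀ s k, 0 < p s k) (hps : ∀ s, ∑ k, p s k = 1) :
    ∃ ε > 0, ∀ q : QT → V → ℝ, (∀ s k, 0 < q s k) → (∀ s, ∑ k, q s k = 1) →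
      (∀ s k, |p s k - q s k| < ε) →
      variance (fun ω => score p c U S ω - score q c U S ω) P <
        variance (fun ω => score p c U S ω - score q c U' S ω) P := by
  classical
  haveI hVne : Nonempty V := Fintype.card_pos_iff.mp (by omega)
  haveI : IsProbabilityMeasure stdGumbel := by
    rw [← hgumbel (Classical.arbitrary V)]
    exact Measure.isProbabilityMeasure_map (hUm _).aemeasurable
  -- winning sets in noise space
  set B : (QT → V → ℝ) → QT → Set (V → ℝ) := fun r s =>
    {u | ∀ k ≠ c s, Real.log (r s k) + u k < Real.log (r s (c s)) + u (c s)} with hB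
  have hBmeas : ∀ r s, MeasurableSet (B r s) := by
    intro r s
    have : B r s = ⋂ k, ⋂ (_ : k ≠ c s),
        {u : V → ℝ | Real.log (r s k) + u k < Real.log (r s (c s)) + u (c s)} := by
      ext u; simp [hB]
    rw [this]
    exact MeasurableSet.iInter fun k => MeasurableSet.iInter fun _ =>
      measurableSet_lt (by fun_prop) (by fun_prop)
  set Φ : Ω → V → ℝ := fun ω k => U k ω with hΦ
  set Φ' : Ω → V → ℝ := fun ω k => U' k ω with hΦ'
  have hΦm : Measurable Φ := measurable_pi_lambda _ fun k => hUm k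
  have hΦ'm : Measurable Φ' := measurable_pi_lambda _ fun k => hU'm k
  -- independence of the two noise families
  have hmeasSum : ∀ i : V ⊕ V, Measurable (Sum.elim U U' i) := by
    intro i; cases i with
    | inl k => exact hUm k
    | inr k => exact hU'm k
  have hUU'_indep : IndepFun Φ Φ' P := by
    have h := hUU'.indepFun_finset (Finset.univ.image Sum.inl) (Finset.univ.image Sum.inr)
      (by simp [Finset.disjoint_left]) hmeasSum
    have h2 := h.comp (φ := fun v : (↑(Finset.univ.image (Sum.inl : V → V ⊕ V)) → ℝ) =>
        fun k : V => v ⟨Sum.inl k, by simp⟩)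
      (ψ := fun v : (↑(Finset.univ.image (Sum.inr : V → V ⊕ V)) → ℝ) =>
        fun k : V => v ⟨Sum.inr k, by simp⟩)
      (by fun_prop) (by fun_prop)
    exact h2
  -- product formula for intersections of U-events
  have hprodU : ∀ (I : V → Set ℝ), (∀ k, MeasurableSet (I k)) →
      P (⋂ k, U k ⁻¹' I k) = ∏ k, stdGumbel (I k) := by
    intro I hI
    have h := hUU'.measure_inter_preimage_eq_mul (Finset.univ.image Sum.inl)
      (sets := Sum.elim I fun _ => Set.univ) ?_
    · have e1 : (⋂ i ∈ Finset.univ.image (Sum.inl : V → V ⊕ V),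
          Sum.elim U U' i ⁻¹' Sum.elim I (fun _ => Set.univ) i) = ⋂ k, U k ⁻¹' I k := by
        ext ω; simp
      have e2 : ∏ i ∈ Finset.univ.image (Sum.inl : V → V ⊕ V),
          P (Sum.elim U U' i ⁻¹' Sum.elim I (fun _ => Set.univ) i)
          = ∏ k, P (U k ⁻¹' I k) := by
        rw [Finset.prod_image (by simp [Sum.inl_injective])]
        rfl
      rw [e1, e2] at h
      rw [h]
      exact Finset.prod_congr rfl fun k _ => by
        rw [← hgumbel k, Measure.map_apply (hUm k) (hI k)]
    · intro i _
      cases i with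
      | inl k => exact hI k
      | inr k => exact MeasurableSet.univ
  -- splitting along S and the two noise families
  have hkey : ∀ (B₁ B₂ : Set (V → ℝ)), MeasurableSet B₁ → MeasurableSet B₂ → ∀ s : QT,
      P (S ⁻¹' {s} ∩ (Φ ⁻¹' B₁ ∩ Φ' ⁻¹' B₂)) =
        ENNReal.ofReal (w s) * (P (Φ ⁻¹' B₁) * P (Φ' ⁻¹' B₂)) := by
    intro B₁ B₂ h₁ h₂ s
    have hpair : Φ ⁻¹' B₁ ∩ Φ' ⁻¹' B₂ = (fun ω => (Φ ω, Φ' ω)) ⁻¹' (B₁ ×ˢ B₂) := by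
      rw [Set.mk_preimage_prod]
    rw [hpair,
      hS_UU'.measure_inter_preimage_eq_mul _ _ (measurableSet_singleton s) (h₁.prod h₂),
      hSw, ← hpair, hUU'_indep.measure_inter_preimage_eq_mul B₁ B₂ h₁ h₂]
  -- main decomposition, real-valued
  have hPE : ∀ (B₁ B₂ : QT → Set (V → ℝ)), (∀ s, MeasurableSet (B₁ s)) →
      (∀ s, MeasurableSet (B₂ s)) →
      (P (⋃ s, S ⁻¹' {s} ∩ (Φ ⁻¹' B₁ s ∩ Φ' ⁻¹' B₂ s))).toReal
        = ∑ s, w s * ((P (Φ ⁻¹' B₁ s)).toReal * (P (Φ' ⁻¹' B₂ s)).toReal) := by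
    intro B₁ B₂ h₁ h₂
    have hdis : Pairwise (Function.onFun Disjoint fun s : QT =>
        S ⁻¹' {s} ∩ (Φ ⁻¹' B₁ s ∩ Φ' ⁻¹' B₂ s)) := by
      intro s t hst
      refine Set.disjoint_left.2 fun ω hωs hωt => hst ?_
      have h1 : S ω = s := hωs.1
      have h2 : S ω = t := hωt.1
      rw [← h1, h2]
    have hmeas : ∀ s : QT, MeasurableSet (S ⁻¹' {s} ∩ (Φ ⁻¹' B₁ s ∩ Φ' ⁻¹' B₂ s)) :=
      fun s => (hS (measurableSet_singleton s)).inter ((hΦm (h₁ s)).inter (hΦ'm (h₂ s)))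
    rw [measure_iUnion hdis hmeas, tsum_fintype]
    rw [ENNReal.toReal_sum (fun s _ => measure_ne_top _ _)]
    refine Finset.sum_congr rfl fun s _ => ?_
    rw [hkey _ _ (h₁ s) (h₂ s) s, ENNReal.toReal_mul, ENNReal.toReal_mul,
      ENNReal.toReal_ofReal (hw s)]
  -- the score events
  set Ev : (QT → V → ℝ) → (Ω → V → ℝ) → Set Ω := fun r Ψ => {ω | Ψ ω ∈ B r (S ω)} with hEv
  have hEvU : ∀ r, Ev r Φ = ⋃ s, S ⁻¹' {s} ∩ (Φ ⁻¹' B r s ∩ Φ' ⁻¹' Set.univ) := by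
    intro r; ext ω
    simp only [hEv, Set.mem_setOf_eq, Set.mem_iUnion, Set.mem_inter_iff, Set.mem_preimage,
      Set.mem_singleton_iff, Set.mem_univ, and_true]
    constructor
    · intro h; exact ⟨S ω, rfl, h⟩
    · rintro ⟨s, hs, h⟩; rwa [hs]
  have hEvU' : ∀ r, Ev r Φ' = ⋃ s, S ⁻¹' {s} ∩ (Φ ⁻¹' Set.univ ∩ Φ' ⁻¹' B r s) := by
    intro r; ext ω
    simp only [hEv, Set.mem_setOf_eq, Set.mem_iUnion, Set.mem_inter_iff, Set.mem_preimage,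
      Set.mem_singleton_iff, Set.mem_univ, true_and]
    constructor
    · intro h; exact ⟨S ω, rfl, h⟩
    · rintro ⟨s, hs, h⟩; rwa [hs]
  have hdiff1 : ∀ r r', Ev r Φ \ Ev r' Φ'
      = ⋃ s, S ⁻¹' {s} ∩ (Φ ⁻¹' B r s ∩ Φ' ⁻¹' (B r' s)ᶜ) := by
    intro r r'; ext ω
    simp only [hEv, Set.mem_diff, Set.mem_setOf_eq, Set.mem_iUnion, Set.mem_inter_iff,
      Set.mem_preimage, Set.mem_singleton_iff, Set.mem_compl_iff]
    constructor
    · rintro ⟨h1, h2⟩; exact ⟨S ω, rfl, h1, h2⟩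
    · rintro ⟨s, hs, h1, h2⟩; rw [hs]; exact ⟨h1, h2⟩
  have hdiff2 : ∀ r r', Ev r' Φ' \ Ev r Φ
      = ⋃ s, S ⁻¹' {s} ∩ (Φ ⁻¹' (B r s)ᶜ ∩ Φ' ⁻¹' (B r' s)) := by
    intro r r'; ext ω
    simp only [hEv, Set.mem_diff, Set.mem_setOf_eq, Set.mem_iUnion, Set.mem_inter_iff,
      Set.mem_preimage, Set.mem_singleton_iff, Set.mem_compl_iff]
    constructor
    · rintro ⟨h1, h2⟩; exact ⟨S ω, rfl, h2, h1⟩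
    · rintro ⟨s, hs, h1, h2⟩; rw [hs]; exact ⟨h2, h1⟩
  have hEvMeasU : ∀ r, MeasurableSet (Ev r Φ) := fun r => by
    rw [hEvU r]
    exact MeasurableSet.iUnion fun s => (hS (measurableSet_singleton s)).inter
      ((hΦm (hBmeas r s)).inter (hΦ'm MeasurableSet.univ))
  have hEvMeasU' : ∀ r, MeasurableSet (Ev r Φ') := fun r => by
    rw [hEvU' r]
    exact MeasurableSet.iUnion fun s => (hS (measurableSet_singleton s)).inter
      ((hΦm MeasurableSet.univ).inter (hΦ'm (hBmeas r s)))
  -- score as indicator of the event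
  have hscoreU : ∀ r : QT → V → ℝ, score r c U S = (Ev r Φ).indicator fun _ => (1:ℝ) := fun r => rfl
  have hscoreU' : ∀ r : QT → V → ℝ, score r c U' S = (Ev r Φ').indicator fun _ => (1:ℝ) := fun r => rfl
  -- integral facts
  have hInt : ∀ (A : Set Ω), MeasurableSet A →
      ∫ ω, A.indicator (fun _ => (1:ℝ)) ω ∂P = (P A).toReal := by
    intro A hA
    rw [integral_indicator_const (1:ℝ) hA]; simp; rfl
  have hIntegrable : ∀ (A : Set Ω), MeasurableSet A →
      Integrable (A.indicator fun _ => (1:ℝ)) P :=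
    fun A hA => (integrable_const (1:ℝ)).indicator hA
  have hMem : ∀ (A C : Set Ω), MeasurableSet A → MeasurableSet C →
      MemLp (fun ω => A.indicator (fun _ => (1:ℝ)) ω - C.indicator (fun _ => (1:ℝ)) ω) 2 P := by
    intro A C hA hC
    refine MemLp.mono_exponent (memLp_top_of_bound ?_ 1 ?_) le_top
    · exact ((measurable_const.indicator hA).sub (measurable_const.indicator hC)).aestronglyMeasurable
    · refine Filter.Eventually.of_forall fun ω => ?_
      by_cases h1 : ω ∈ A <;> by_cases h2 : ω ∈ C <;>
        simp [Set.indicator_apply, h1, h2]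
  have hsq : ∀ (A C : Set Ω) (ω : Ω),
      (A.indicator (fun _ => (1:ℝ)) ω - C.indicator (fun _ => (1:ℝ)) ω)^2
        = (A \ C).indicator (fun _ => (1:ℝ)) ω + (C \ A).indicator (fun _ => (1:ℝ)) ω := by
    intro A C ω
    by_cases h1 : ω ∈ A <;> by_cases h2 : ω ∈ C <;>
      simp [Set.indicator_apply, h1, h2]
  have hcompl : ∀ (A : Set Ω), MeasurableSet A → (P Aᶜ).toReal = 1 - (P A).toReal := by
    intro A hA
    rw [measure_compl hA (measure_ne_top _ _), measure_univ,
      ENNReal.toReal_sub_of_le prob_le_one ENNReal.one_ne_top, ENNReal.toReal_one]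
  have htoReal_le1 : ∀ A : Set Ω, (P A).toReal ≤ 1 := fun A => by
    simpa using ENNReal.toReal_mono ENNReal.one_ne_top (prob_le_one (μ := P) (s := A))
  -- positivity of winning probabilities for p
  have hαpos : ∀ s, 0 < (P (Φ ⁻¹' B p s)).toReal := by
    intro s
    set M := Finset.univ.sup' Finset.univ_nonempty
      (fun k => Real.log (p s k) - Real.log (p s (c s))) with hM
    set I : V → Set ℝ := fun k =>
      if k = c s then Set.Icc (M+1) (M+2) else Set.Icc (-2) (-1) with hI
    have hImeas : ∀ k, MeasurableSet (I k) := by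
      intro k; by_cases h : k = c s <;> simp only [hI, h, if_pos, if_neg, if_true, if_false] <;>
        exact measurableSet_Icc
    have hsub : (⋂ k, U k ⁻¹' I k) ⊆ Φ ⁻¹' B p s := by
      intro ω hω
      simp only [Set.mem_iInter, Set.mem_preimage] at hω
      intro k hk
      have h1 : U k ω ∈ Set.Icc (-2:ℝ) (-1) := by simpa [hI, hk] using hω k
      have h2 : U (c s) ω ∈ Set.Icc (M+1) (M+2) := by simpa [hI] using hω (c s)
      have hMk : Real.log (p s k) - Real.log (p s (c s)) ≤ M := by
        rw [hM]
        exact Finset.le_sup' (fun k => Real.log (p s k) - Real.log (p s (c s)))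
          (Finset.mem_univ k)
      show Real.log (p s k) + U k ω < Real.log (p s (c s)) + U (c s) ω
      linarith [h1.2, h2.1]
    have hpos : 0 < P (⋂ k, U k ⁻¹' I k) := by
      rw [hprodU I hImeas]
      refine CanonicallyOrderedAdd.prod_pos.mpr fun k _ => ?_
      by_cases h : k = c s
      · have he : I k = Set.Icc (M+1) (M+2) := by simp [hI, h]
        rw [he]; exact stdGumbel_Icc_pos (by linarith)
      · have he : I k = Set.Icc (-2) (-1) := by simp [hI, h]
        rw [he]; exact stdGumbel_Icc_pos (by norm_num)
    exact ENNReal.toReal_pos (lt_of_lt_of_le hpos (measure_mono hsub)).ne'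
      (measure_ne_top _ _)
  have hαlt1 : ∀ s, (P (Φ ⁻¹' B p s)).toReal < 1 := by
    intro s
    obtain ⟨k₀, hk₀⟩ := Fintype.exists_ne_of_one_lt_card (by omega) (c s)
    set M' := Real.log (p s (c s)) - Real.log (p s k₀) with hM'
    set J : V → Set ℝ := fun k =>
      if k = c s then Set.Icc (-2) (-1)
      else if k = k₀ then Set.Icc (M'+1) (M'+2) else Set.univ with hJ
    have hJmeas : ∀ k, MeasurableSet (J k) := by
      intro k
      by_cases h1 : k = c s
      · simp only [hJ]; rw [if_pos h1]; exact measurableSet_Icc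
      · by_cases h2 : k = k₀
        · simp only [hJ]; rw [if_neg h1, if_pos h2]; exact measurableSet_Icc
        · simp only [hJ]; rw [if_neg h1, if_neg h2]; exact MeasurableSet.univ
    have hsub : (⋂ k, U k ⁻¹' J k) ⊆ (Φ ⁻¹' B p s)ᶜ := by
      intro ω hω
      simp only [Set.mem_iInter, Set.mem_preimage] at hω
      intro hmem
      have h1 : U (c s) ω ∈ Set.Icc (-2:ℝ) (-1) := by simpa [hJ] using hω (c s)
      have h2 : U k₀ ω ∈ Set.Icc (M'+1) (M'+2) := by simpa [hJ, hk₀] using hω k₀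
      have h3 : Real.log (p s k₀) + U k₀ ω < Real.log (p s (c s)) + U (c s) ω := hmem k₀ hk₀
      have h4 : M' = Real.log (p s (c s)) - Real.log (p s k₀) := hM'
      linarith [h1.2, h2.1]
    have hpos : 0 < P ((Φ ⁻¹' B p s)ᶜ) := by
      refine lt_of_lt_of_le ?_ (measure_mono hsub)
      rw [hprodU J hJmeas]
      refine CanonicallyOrderedAdd.prod_pos.mpr fun k _ => ?_
      by_cases ha : k = c s
      · have he : J k = Set.Icc (-2) (-1) := by simp [hJ, ha]
        rw [he]; exact stdGumbel_Icc_pos (by norm_num)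
      · by_cases hb : k = k₀
        · have he : J k = Set.Icc (M'+1) (M'+2) := by simp [hJ, ha, hb, hk₀]
          rw [he]; exact stdGumbel_Icc_pos (by linarith)
        · have he : J k = Set.univ := by simp [hJ, ha, hb]
          rw [he]; simp [measure_univ]
    have hlt : P (Φ ⁻¹' B p s) < 1 := by
      rcases lt_or_eq_of_le (prob_le_one (μ := P) (s := Φ ⁻¹' B p s)) with h | h
      · exact h
      · exfalso
        have hc0 : P ((Φ ⁻¹' B p s)ᶜ) = 0 := by
          rw [measure_compl (hΦm (hBmeas p s)) (measure_ne_top _ _), measure_univ, h]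
          simp
        rw [hc0] at hpos
        exact lt_irrefl _ hpos
    have := (ENNReal.toReal_lt_toReal (measure_ne_top _ _) ENNReal.one_ne_top).2 hlt
    simpa using this
  -- the variance gap constant
  set m := ∑ s, w s * ((P (Φ ⁻¹' B p s)).toReal * (1 - (P (Φ ⁻¹' B p s)).toReal)) with hm_def
  have hm : 0 < m := by
    obtain ⟨s₀, hs₀⟩ : ∃ s, 0 < w s := by
      by_contra hall; push_neg at hall
      have h0 : ∑ s, w s ≤ 0 := Finset.sum_nonpos fun s _ => hall s
      linarith
    refine Finset.sum_pos' (fun s _ => ?_) ⟨s₀, Finset.mem_univ s₀, ?_⟩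
    · exact mul_nonneg (hw s)
        (mul_nonneg ENNReal.toReal_nonneg (by linarith [hαlt1 s]))
    · exact mul_pos hs₀ (mul_pos (hαpos s₀) (by linarith [hαlt1 s₀]))
  -- the flip bound
  have hflip : ∀ j k : V, j ≠ k → ∀ a b : ℝ,
      P {ω | U j ω - U k ω ∈ Set.Icc a b} ≤ ENNReal.ofReal ((b - a) * Real.exp (-1)) := by
    intro j k hjk a b
    have hind : IndepFun (U j) (U k) P :=
      hUU'.indepFun (show (Sum.inl j : V ⊕ V) ≠ Sum.inl k by simp [hjk])
    have hmap : P.map (fun ω => (U j ω, U k ω)) = stdGumbel.prod stdGumbel := by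
      have h := (indepFun_iff_map_prod_eq_prod_map_map
        (hUm j).aemeasurable (hUm k).aemeasurable).1 hind
      rw [h, hgumbel j, hgumbel k]
    have hT : MeasurableSet {x : ℝ × ℝ | x.1 - x.2 ∈ Set.Icc a b} :=
      (measurable_fst.sub measurable_snd) measurableSet_Icc
    have heq : {ω | U j ω - U k ω ∈ Set.Icc a b}
        = (fun ω => (U j ω, U k ω)) ⁻¹' {x : ℝ × ℝ | x.1 - x.2 ∈ Set.Icc a b} := rfl
    rw [heq, ← Measure.map_apply ((hUm j).prodMk (hUm k)) hT, hmap, Measure.prod_apply hT]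
    have hslice : ∀ x : ℝ,
        (Prod.mk x ⁻¹' {y : ℝ × ℝ | y.1 - y.2 ∈ Set.Icc a b}) = Set.Icc (x - b) (x - a) := by
      intro x; ext y
      simp only [Set.mem_preimage, Set.mem_setOf_eq, Set.mem_Icc]
      constructor <;> intro h <;> exact ⟨by linarith [h.1, h.2], by linarith [h.1, h.2]⟩
    calc ∫⁻ x, stdGumbel (Prod.mk x ⁻¹' {y : ℝ × ℝ | y.1 - y.2 ∈ Set.Icc a b}) ∂stdGumbel
        ≤ ∫⁻ _x, ENNReal.ofReal ((b - a) * Real.exp (-1)) ∂stdGumbel := by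
          refine lintegral_mono fun x => ?_
          rw [hslice x]
          have := stdGumbel_Icc_le (x - b) (x - a)
          rwa [show x - a - (x - b) = b - a by ring] at this
      _ = ENNReal.ofReal ((b - a) * Real.exp (-1)) := by simp
  -- choice of ε
  set δ0 := (Finset.univ : Finset (QT × V)).inf' Finset.univ_nonempty
    (fun sk => p sk.1 sk.2) with hδ0
  have hδ0pos : 0 < δ0 := by
    rw [hδ0, Finset.lt_inf'_iff]
    exact fun b _ => hp b.1 b.2
  have hδ0le : ∀ s k, δ0 ≤ p s k := fun s k => by
    rw [hδ0]; exact Finset.inf'_le _ (Finset.mem_univ (s, k))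
  set N : ℝ := (Fintype.card QT : ℝ) * (Fintype.card V : ℝ) with hN
  have hNpos : 0 < N := by
    rw [hN]
    exact mul_pos (Nat.cast_pos.2 Fintype.card_pos) (Nat.cast_pos.2 Fintype.card_pos)
  obtain ⟨ε, hεpos, hεle1, hεle2⟩ :
      ∃ ε : ℝ, 0 < ε ∧ ε ≤ δ0 / 2 ∧ ε ≤ m * δ0 / (8 * N) :=
    ⟨min (δ0 / 2) (m * δ0 / (8 * N)),
      lt_min (half_pos hδ0pos) (div_pos (mul_pos hm hδ0pos) (by linarith)),
      min_le_left _ _, min_le_right _ _⟩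
  refine ⟨ε, hεpos, ?_⟩
  intro q hq hqsum hqε
  -- closeness of logs
  have hqhalf : ∀ s k, δ0 / 2 ≤ q s k := by
    intro s k
    have h3 : |p s k - q s k| < δ0 / 2 := lt_of_lt_of_le (hqε s k) hεle1
    have h4 := (abs_lt.1 h3).2
    have h5 := hδ0le s k
    linarith
  have hlogb : ∀ s k, |Real.log (p s k) - Real.log (q s k)| ≤ 2 * ε / δ0 := by
    intro s k
    have hpk : δ0 / 2 ≤ p s k := by linarith [hδ0le s k, hδ0pos]
    have h := abs_log_sub_log_le (half_pos hδ0pos) hpk (hqhalf s k)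
    have h2 : |p s k - q s k| / (δ0 / 2) ≤ ε / (δ0 / 2) :=
      (div_le_div_iff_of_pos_right (half_pos hδ0pos)).2 (hqε s k).le
    have h3 : ε / (δ0 / 2) = 2 * ε / δ0 := by
      field_simp
    linarith [h.trans h2]
  have hLdiff : ∀ s k,
      |(Real.log (p s k) - Real.log (p s (c s))) - (Real.log (q s k) - Real.log (q s (c s)))|
        ≤ 4 * ε / δ0 := by
    intro s k
    have h1 := abs_le.1 (hlogb s k)
    have h2 := abs_le.1 (hlogb s (c s))
    have h0 : (Real.log (p s k) - Real.log (p s (c s)))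
        - (Real.log (q s k) - Real.log (q s (c s)))
        = (Real.log (p s k) - Real.log (q s k))
          - (Real.log (p s (c s)) - Real.log (q s (c s))) := by ring
    have hsum : 2 * ε / δ0 + 2 * ε / δ0 = 4 * ε / δ0 := by ring
    rw [h0, abs_le]
    constructor
    · linarith [h1.1, h2.2, hsum]
    · linarith [h1.2, h2.1, hsum]
  -- flip events
  set F : QT → V → Set Ω := fun s k =>
    if k = c s then (∅ : Set Ω) else
      {ω | U k ω - U (c s) ω ∈ Set.Icc
        (min (-(Real.log (p s k) - Real.log (p s (c s))))
             (-(Real.log (q s k) - Real.log (q s (c s)))))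
        (max (-(Real.log (p s k) - Real.log (p s (c s))))
             (-(Real.log (q s k) - Real.log (q s (c s)))))} with hF
  have hFbound : ∀ s k, P (F s k) ≤ ENNReal.ofReal (4 * ε / δ0) := by
    intro s k
    by_cases h : k = c s
    · have he : F s k = ∅ := by rw [hF]; simp [h]
      rw [he]
      simp
    · have he : F s k = {ω | U k ω - U (c s) ω ∈ Set.Icc
        (min (-(Real.log (p s k) - Real.log (p s (c s))))
             (-(Real.log (q s k) - Real.log (q s (c s)))))
        (max (-(Real.log (p s k) - Real.log (p s (c s))))
             (-(Real.log (q s k) - Real.log (q s (c s)))))} := by rw [hF]; simp [h]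
      rw [he]
      refine le_trans (hflip k (c s) h _ _) (ENNReal.ofReal_le_ofReal ?_)
      rw [max_sub_min_eq_abs]
      have hA : (-(Real.log (q s k) - Real.log (q s (c s)))) -
          (-(Real.log (p s k) - Real.log (p s (c s))))
          = (Real.log (p s k) - Real.log (p s (c s))) -
            (Real.log (q s k) - Real.log (q s (c s))) := by ring
      rw [hA]
      have hexp : Real.exp (-1) ≤ 1 := by
        rw [Real.exp_le_one_iff]; norm_num
      have h1 := hLdiff s k
      have h2 : (0:ℝ) ≤ |(Real.log (p s k) - Real.log (p s (c s))) -
             (Real.log (q s k) - Real.log (q s (c s)))| := abs_nonneg _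
      nlinarith [Real.exp_pos (-1 : ℝ)]
  have hEvmem : ∀ (r : QT → V → ℝ) (ω : Ω), ω ∈ Ev r Φ ↔ ∀ k, k ≠ c (S ω) →
      Real.log (r (S ω) k) + U k ω
        < Real.log (r (S ω) (c (S ω))) + U (c (S ω)) ω := by
    intro r ω
    simp only [hEv, hB, hΦ, Set.mem_setOf_eq]
  have hUnion : (Ev p Φ \ Ev q Φ) ∪ (Ev q Φ \ Ev p Φ) ⊆ ⋃ s, ⋃ k, F s k := by
    rintro ω (⟨hin, hout⟩ | ⟨hin, hout⟩)
    · have hPwin := (hEvmem p ω).1 hin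
      have hQfail : ¬ ∀ k, k ≠ c (S ω) → Real.log (q (S ω) k) + U k ω <
          Real.log (q (S ω) (c (S ω))) + U (c (S ω)) ω := fun hc => hout ((hEvmem q ω).2 hc)
      push_neg at hQfail
      obtain ⟨k, hk, hge⟩ := hQfail
      refine Set.mem_iUnion.2 ⟨S ω, Set.mem_iUnion.2 ⟨k, ?_⟩⟩
      have he : F (S ω) k = {ω' | U k ω' - U (c (S ω)) ω' ∈ Set.Icc
          (min (-(Real.log (p (S ω) k) - Real.log (p (S ω) (c (S ω)))))
               (-(Real.log (q (S ω) k) - Real.log (q (S ω) (c (S ω))))))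
          (max (-(Real.log (p (S ω) k) - Real.log (p (S ω) (c (S ω)))))
               (-(Real.log (q (S ω) k) - Real.log (q (S ω) (c (S ω))))))} := by
        rw [hF]; simp [hk]
      rw [he]
      have hw1 := hPwin k hk
      simp only [Set.mem_setOf_eq, Set.mem_Icc]
      constructor
      · refine le_trans (min_le_right _ _) ?_
        linarith
      · refine le_trans ?_ (le_max_left _ _)
        linarith
    · have hQwin := (hEvmem q ω).1 hin
      have hPfail : ¬ ∀ k, k ≠ c (S ω) → Real.log (p (S ω) k) + U k ω <
          Real.log (p (S ω) (c (S ω))) + U (c (S ω)) ω := fun hc => hout ((hEvmem p ω).2 hc)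
      push_neg at hPfail
      obtain ⟨k, hk, hge⟩ := hPfail
      refine Set.mem_iUnion.2 ⟨S ω, Set.mem_iUnion.2 ⟨k, ?_⟩⟩
      have he : F (S ω) k = {ω' | U k ω' - U (c (S ω)) ω' ∈ Set.Icc
          (min (-(Real.log (p (S ω) k) - Real.log (p (S ω) (c (S ω)))))
               (-(Real.log (q (S ω) k) - Real.log (q (S ω) (c (S ω))))))
          (max (-(Real.log (p (S ω) k) - Real.log (p (S ω) (c (S ω)))))
               (-(Real.log (q (S ω) k) - Real.log (q (S ω) (c (S ω))))))} := by
        rw [hF]; simp [hk]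
      rw [he]
      have hw1 := hQwin k hk
      simp only [Set.mem_setOf_eq, Set.mem_Icc]
      constructor
      · refine le_trans (min_le_left _ _) ?_
        linarith
      · refine le_trans ?_ (le_max_right _ _)
        linarith
  have hPsum : P ((Ev p Φ \ Ev q Φ) ∪ (Ev q Φ \ Ev p Φ)) ≤ ENNReal.ofReal (m / 2) := by
    have hεle : ε ≤ m * δ0 / (8 * N) := hεle2
    calc P ((Ev p Φ \ Ev q Φ) ∪ (Ev q Φ \ Ev p Φ))
        ≤ P (⋃ s, ⋃ k, F s k) := measure_mono hUnion
      _ ≤ ∑ s : QT, P (⋃ k, F s k) := measure_iUnion_fintype_le _ _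
      _ ≤ ∑ s : QT, ∑ k : V, P (F s k) :=
          Finset.sum_le_sum fun s _ => measure_iUnion_fintype_le _ _
      _ ≤ ∑ s : QT, ∑ k : V, ENNReal.ofReal (4 * ε / δ0) :=
          Finset.sum_le_sum fun s _ => Finset.sum_le_sum fun k _ => hFbound s k
      _ = ENNReal.ofReal (∑ s : QT, ∑ k : V, 4 * ε / δ0) := by
          rw [ENNReal.ofReal_sum_of_nonneg (fun s _ => Finset.sum_nonneg fun k _ => by positivity)]
          exact Finset.sum_congr rfl fun s _ =>
            (ENNReal.ofReal_sum_of_nonneg (fun k _ => by positivity)).symm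
      _ ≤ ENNReal.ofReal (m / 2) := by
          apply ENNReal.ofReal_le_ofReal
          rw [Finset.sum_const, Finset.sum_const, Finset.card_univ, Finset.card_univ,
            nsmul_eq_mul, nsmul_eq_mul]
          have hkey2 : (Fintype.card QT : ℝ) * ((Fintype.card V : ℝ) * (4 * ε / δ0))
              = 4 * N * ε / δ0 := by rw [hN]; ring
          rw [hkey2]
          rw [div_le_iff₀ hδ0pos]
          have h1 : 4 * N * ε ≤ 4 * N * (m * δ0 / (8 * N)) :=
            mul_le_mul_of_nonneg_left hεle (by linarith)
          have h2 : 4 * N * (m * δ0 / (8 * N)) = m / 2 * δ0 := by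
            field_simp
            ring
          linarith
  -- the coupled variance is at most m/2
  have hL : variance (fun ω => score p c U S ω - score q c U S ω) P ≤ m / 2 := by
    have hD1m : MeasurableSet (Ev p Φ \ Ev q Φ) := (hEvMeasU p).diff (hEvMeasU q)
    have hD2m : MeasurableSet (Ev q Φ \ Ev p Φ) := (hEvMeasU q).diff (hEvMeasU p)
    have hZ : (fun ω => score p c U S ω - score q c U S ω)
        = fun ω => (Ev p Φ).indicator (fun _ => (1:ℝ)) ω
            - (Ev q Φ).indicator (fun _ => (1:ℝ)) ω := by
      rw [hscoreU p, hscoreU q]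
    rw [hZ]
    have hvb := variance_le_expectation_sq (μ := P)
      (X := fun ω => (Ev p Φ).indicator (fun _ => (1:ℝ)) ω
          - (Ev q Φ).indicator (fun _ => (1:ℝ)) ω)
      (((measurable_const.indicator (hEvMeasU p)).sub
        (measurable_const.indicator (hEvMeasU q))).aestronglyMeasurable)
    refine le_trans hvb ?_
    have e1 : ((fun ω => (Ev p Φ).indicator (fun _ => (1:ℝ)) ω
        - (Ev q Φ).indicator (fun _ => (1:ℝ)) ω) ^ 2)
        = fun ω => (Ev p Φ \ Ev q Φ).indicator (fun _ => (1:ℝ)) ω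
            + (Ev q Φ \ Ev p Φ).indicator (fun _ => (1:ℝ)) ω := by
      funext ω
      rw [Pi.pow_apply]
      exact hsq _ _ ω
    have hsq2 : P[(fun ω => (Ev p Φ).indicator (fun _ => (1:ℝ)) ω
        - (Ev q Φ).indicator (fun _ => (1:ℝ)) ω) ^ 2]
        = (P (Ev p Φ \ Ev q Φ)).toReal + (P (Ev q Φ \ Ev p Φ)).toReal := by
      rw [e1]
      exact (integral_add (hIntegrable _ hD1m) (hIntegrable _ hD2m)).trans
        (by rw [hInt _ hD1m, hInt _ hD2m])
    rw [hsq2]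
    have e3 : (P (Ev p Φ \ Ev q Φ)).toReal + (P (Ev q Φ \ Ev p Φ)).toReal
        = (P ((Ev p Φ \ Ev q Φ) ∪ (Ev q Φ \ Ev p Φ))).toReal := by
      rw [measure_union disjoint_sdiff_sdiff hD2m,
        ENNReal.toReal_add (measure_ne_top _ _) (measure_ne_top _ _)]
    have e4 : (P ((Ev p Φ \ Ev q Φ) ∪ (Ev q Φ \ Ev p Φ))).toReal ≤ m / 2 := by
      have h := ENNReal.toReal_mono ENNReal.ofReal_ne_top hPsum
      rwa [ENNReal.toReal_ofReal (by linarith)] at h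
    linarith
  -- the independent variance is at least m
  have hRge : m ≤ variance (fun ω => score p c U S ω - score q c U' S ω) P := by
    have hD1m : MeasurableSet (Ev p Φ \ Ev q Φ') := (hEvMeasU p).diff (hEvMeasU' q)
    have hD2m : MeasurableSet (Ev q Φ' \ Ev p Φ) := (hEvMeasU' q).diff (hEvMeasU p)
    have hZ : (fun ω => score p c U S ω - score q c U' S ω)
        = fun ω => (Ev p Φ).indicator (fun _ => (1:ℝ)) ω
            - (Ev q Φ').indicator (fun _ => (1:ℝ)) ω := by
      rw [hscoreU p, hscoreU' q]
    rw [hZ, variance_eq_sub (hMem _ _ (hEvMeasU p) (hEvMeasU' q))]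
    have e1 : ((fun ω => (Ev p Φ).indicator (fun _ => (1:ℝ)) ω
        - (Ev q Φ').indicator (fun _ => (1:ℝ)) ω) ^ 2)
        = fun ω => (Ev p Φ \ Ev q Φ').indicator (fun _ => (1:ℝ)) ω
            + (Ev q Φ' \ Ev p Φ).indicator (fun _ => (1:ℝ)) ω := by
      funext ω
      rw [Pi.pow_apply]
      exact hsq _ _ ω
    have hsq2 : P[(fun ω => (Ev p Φ).indicator (fun _ => (1:ℝ)) ω
        - (Ev q Φ').indicator (fun _ => (1:ℝ)) ω) ^ 2]
        = (P (Ev p Φ \ Ev q Φ')).toReal + (P (Ev q Φ' \ Ev p Φ)).toReal := by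
      rw [e1]
      exact (integral_add (hIntegrable _ hD1m) (hIntegrable _ hD2m)).trans
        (by rw [hInt _ hD1m, hInt _ hD2m])
    have hint : P[fun ω => (Ev p Φ).indicator (fun _ => (1:ℝ)) ω
        - (Ev q Φ').indicator (fun _ => (1:ℝ)) ω]
        = (P (Ev p Φ)).toReal - (P (Ev q Φ')).toReal :=
      (integral_sub (hIntegrable _ (hEvMeasU p)) (hIntegrable _ (hEvMeasU' q))).trans
        (by rw [hInt _ (hEvMeasU p), hInt _ (hEvMeasU' q)])
    rw [hsq2, hint]
    have hv1 : (P (Ev p Φ \ Ev q Φ')).toReal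
        = ∑ s, w s * ((P (Φ ⁻¹' B p s)).toReal * (1 - (P (Φ' ⁻¹' B q s)).toReal)) := by
      rw [hdiff1 p q]
      have h : (P (⋃ s, S ⁻¹' {s} ∩ (Φ ⁻¹' B p s ∩ Φ' ⁻¹' (B q s)ᶜ))).toReal
          = ∑ s, w s * ((P (Φ ⁻¹' B p s)).toReal * (P (Φ' ⁻¹' (B q s)ᶜ)).toReal) :=
        hPE _ _ (fun s => hBmeas p s) (fun s => (hBmeas q s).compl)
      rw [h]
      refine Finset.sum_congr rfl fun s _ => ?_
      rw [show Φ' ⁻¹' (B q s)ᶜ = (Φ' ⁻¹' B q s)ᶜ from rfl, hcompl _ (hΦ'm (hBmeas q s))]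
    have hv2 : (P (Ev q Φ' \ Ev p Φ)).toReal
        = ∑ s, w s * ((1 - (P (Φ ⁻¹' B p s)).toReal) * (P (Φ' ⁻¹' B q s)).toReal) := by
      rw [hdiff2 p q]
      have h : (P (⋃ s, S ⁻¹' {s} ∩ (Φ ⁻¹' (B p s)ᶜ ∩ Φ' ⁻¹' B q s))).toReal
          = ∑ s, w s * ((P (Φ ⁻¹' (B p s)ᶜ)).toReal * (P (Φ' ⁻¹' B q s)).toReal) :=
        hPE _ _ (fun s => (hBmeas p s).compl) (fun s => hBmeas q s)
      rw [h]
      refine Finset.sum_congr rfl fun s _ => ?_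
      rw [show Φ ⁻¹' (B p s)ᶜ = (Φ ⁻¹' B p s)ᶜ from rfl, hcompl _ (hΦm (hBmeas p s))]
    have hv3 : (P (Ev p Φ)).toReal = ∑ s, w s * (P (Φ ⁻¹' B p s)).toReal := by
      rw [hEvU p]
      have h : (P (⋃ s, S ⁻¹' {s} ∩ (Φ ⁻¹' B p s ∩ Φ' ⁻¹' Set.univ))).toReal
          = ∑ s, w s * ((P (Φ ⁻¹' B p s)).toReal
            * (P (Φ' ⁻¹' (Set.univ : Set (V → ℝ)))).toReal) :=
        hPE _ _ (fun s => hBmeas p s) (fun _ => MeasurableSet.univ)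
      rw [h]
      refine Finset.sum_congr rfl fun s _ => ?_
      rw [Set.preimage_univ, measure_univ, ENNReal.toReal_one, mul_one]
    have hv4 : (P (Ev q Φ')).toReal = ∑ s, w s * (P (Φ' ⁻¹' B q s)).toReal := by
      rw [hEvU' q]
      have h : (P (⋃ s, S ⁻¹' {s} ∩ (Φ ⁻¹' Set.univ ∩ Φ' ⁻¹' B q s))).toReal
          = ∑ s, w s * ((P (Φ ⁻¹' (Set.univ : Set (V → ℝ)))).toReal
            * (P (Φ' ⁻¹' B q s)).toReal) :=
        hPE _ _ (fun _ => MeasurableSet.univ) (fun s => hBmeas q s)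
      rw [h]
      refine Finset.sum_congr rfl fun s _ => ?_
      rw [Set.preimage_univ, measure_univ, ENNReal.toReal_one, one_mul]
    rw [hv1, hv2, hv3, hv4]
    have hCS : (∑ s, w s * (P (Φ ⁻¹' B p s)).toReal
          - ∑ s, w s * (P (Φ' ⁻¹' B q s)).toReal)^2
        ≤ ∑ s, w s * ((P (Φ ⁻¹' B p s)).toReal - (P (Φ' ⁻¹' B q s)).toReal)^2 := by
      have e0 : ∑ s, w s * (P (Φ ⁻¹' B p s)).toReal
            - ∑ s, w s * (P (Φ' ⁻¹' B q s)).toReal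
          = ∑ s, w s * ((P (Φ ⁻¹' B p s)).toReal - (P (Φ' ⁻¹' B q s)).toReal) := by
        rw [← Finset.sum_sub_distrib]
        exact Finset.sum_congr rfl fun s _ => by ring
      rw [e0]
      have h := Finset.sum_mul_sq_le_sq_mul_sq Finset.univ (fun s => Real.sqrt (w s))
        (fun s => Real.sqrt (w s)
          * ((P (Φ ⁻¹' B p s)).toReal - (P (Φ' ⁻¹' B q s)).toReal))
      have e1' : ∑ s, Real.sqrt (w s) * (Real.sqrt (w s)
            * ((P (Φ ⁻¹' B p s)).toReal - (P (Φ' ⁻¹' B q s)).toReal))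
          = ∑ s, w s * ((P (Φ ⁻¹' B p s)).toReal - (P (Φ' ⁻¹' B q s)).toReal) :=
        Finset.sum_congr rfl fun s _ => by
          rw [← mul_assoc, Real.mul_self_sqrt (hw s)]
      have e2' : ∑ s, Real.sqrt (w s) ^ 2 = (1:ℝ) := by
        rw [← hws]
        exact Finset.sum_congr rfl fun s _ => Real.sq_sqrt (hw s)
      have e3' : ∑ s, (Real.sqrt (w s)
            * ((P (Φ ⁻¹' B p s)).toReal - (P (Φ' ⁻¹' B q s)).toReal))^2
          = ∑ s, w s * ((P (Φ ⁻¹' B p s)).toReal - (P (Φ' ⁻¹' B q s)).toReal)^2 :=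
        Finset.sum_congr rfl fun s _ => by
          rw [mul_pow, Real.sq_sqrt (hw s)]
      rw [e1', e2', e3'] at h
      simpa using h
    have hkey3 : ∑ s, w s * ((P (Φ ⁻¹' B p s)).toReal * (1 - (P (Φ' ⁻¹' B q s)).toReal))
          + ∑ s, w s * ((1 - (P (Φ ⁻¹' B p s)).toReal) * (P (Φ' ⁻¹' B q s)).toReal)
          - ∑ s, w s * ((P (Φ ⁻¹' B p s)).toReal - (P (Φ' ⁻¹' B q s)).toReal)^2
        = ∑ s, w s * ((P (Φ ⁻¹' B p s)).toReal * (1 - (P (Φ ⁻¹' B p s)).toReal))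
          + ∑ s, w s * ((P (Φ' ⁻¹' B q s)).toReal * (1 - (P (Φ' ⁻¹' B q s)).toReal)) := by
      rw [← Finset.sum_add_distrib, ← Finset.sum_sub_distrib, ← Finset.sum_add_distrib]
      exact Finset.sum_congr rfl fun s _ => by ring
    have hpos2 : 0 ≤ ∑ s, w s
        * ((P (Φ' ⁻¹' B q s)).toReal * (1 - (P (Φ' ⁻¹' B q s)).toReal)) :=
      Finset.sum_nonneg fun s _ => mul_nonneg (hw s)
        (mul_nonneg ENNReal.toReal_nonneg (by linarith [htoReal_le1 (Φ' ⁻¹' B q s)]))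
    have hmval : m = ∑ s, w s
        * ((P (Φ ⁻¹' B p s)).toReal * (1 - (P (Φ ⁻¹' B p s)).toReal)) := hm_def
    linarith [hCS, hkey3, hpos2]
  calc variance (fun ω => score p c U S ω - score q c U S ω) P
      ≤ m / 2 := hL
    _ < m := by linarith
    _ ≤ variance (fun ω => score p c U S ω - score q c U' S ω) P := hRge
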